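/- A linear map Φ : M_n(ℂ) → M_n(ℂ)^{⊗(a+b)} is (a,b)-unitarily equivariant if and only if its Choi matrix C_Φ commutes with conj(U)^{⊗(a+1)} ⊗ U^{⊗b} for all unitary U ∈ M_n(ℂ). -/

import Mathlib

open Matrix

open scoped Kronecker

section Aux

lemma kron_conjT {m p : Type*} [Fintype m] [Fintype p] [DecidableEq m] [DecidableEq p]
    (A : Matrix m m ℂ) (B : Matrix p p ℂ) : (A ⊗ₖ B)ᴴ = Aᴴ ⊗ₖ Bᴴ := by
  ext ⟨i,f⟩ ⟨j,g⟩
  simp [conjTranspose_apply, kroneckerMap_apply, mul_comm]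

lemma sum_smul_std {n : ℕ} (M : Matrix (Fin n) (Fin n) ℂ) :
    ∑ i, ∑ j, M i j • Matrix.single i j (1:ℂ) = M := by
  conv_rhs => rw [matrix_eq_sum_single M]
  simp

lemma mul_std_mul_apply {n : ℕ} (A B : Matrix (Fin n) (Fin n) ℂ) (p q i j : Fin n) :
    (A * Matrix.single p q (1:ℂ) * B) i j = A i p * B q j := by
  simp [Matrix.mul_apply, Matrix.single, ite_and, Finset.sum_ite_eq, Finset.mul_sum]

lemma row_orth {n : ℕ} {U : Matrix (Fin n) (Fin n) ℂ} (hU : U * Uᴴ = 1) (p q : Fin n) :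
    ∑ x, U p x * (starRingEnd ℂ) (U q x) = (1 : Matrix (Fin n) (Fin n) ℂ) p q := by
  have := congrFun (congrFun hU p) q
  simpa [Matrix.mul_apply, conjTranspose_apply] using this

lemma row_orth' {n : ℕ} {U : Matrix (Fin n) (Fin n) ℂ} (hU : U * Uᴴ = 1) (p q : Fin n) :
    ∑ x, (starRingEnd ℂ) (U p x) * U q x = (1 : Matrix (Fin n) (Fin n) ℂ) p q := by
  have h := congrArg (starRingEnd ℂ) (row_orth hU p q)
  rw [map_sum] at h
  simp only [_root_.map_mul, Complex.conj_conj] at h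
  rw [h]
  simp [Matrix.one_apply, apply_ite (starRingEnd ℂ)]

lemma prod_one_apply {ι : Type*} [Fintype ι] [DecidableEq ι] {n : ℕ} (f g : ι → Fin n) :
    (∏ i, (1 : Matrix (Fin n) (Fin n) ℂ) (f i) (g i))
      = (1 : Matrix (ι → Fin n) (ι → Fin n) ℂ) f g := by
  by_cases h : f = g
  · subst h; simp [Matrix.one_apply]
  · rw [Matrix.one_apply_ne h]
    obtain ⟨i, hi⟩ := Function.ne_iff.mp h
    exact Finset.prod_eq_zero (Finset.mem_univ i) (Matrix.one_apply_ne hi)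

lemma smul_conj_sum {n : ℕ} (U : Matrix (Fin n) (Fin n) ℂ) (f : Fin n → Fin n → ℂ) :
    ∑ i, ∑ j, f i j • (U * Matrix.single i j (1:ℂ) * Uᴴ)
      = U * (∑ i, ∑ j, f i j • Matrix.single i j (1:ℂ)) * Uᴴ := by
  simp only [Matrix.mul_sum, Matrix.sum_mul, Matrix.mul_smul, Matrix.smul_mul]

lemma conj_std {n : ℕ} {U : Matrix (Fin n) (Fin n) ℂ} (hU : U * Uᴴ = 1) (p q : Fin n) :
    ∑ i, ∑ j, ((starRingEnd ℂ) (U p i) * U q j) • (U * Matrix.single i j (1:ℂ) * Uᴴ)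
      = Matrix.single p q (1:ℂ) := by
  rw [smul_conj_sum]
  have h1 : (∑ i, ∑ j, ((starRingEnd ℂ) (U p i) * U q j) • Matrix.single i j (1:ℂ))
      = Uᴴ * Matrix.single p q (1:ℂ) * U := by
    rw [← sum_smul_std (Uᴴ * Matrix.single p q (1:ℂ) * U)]
    refine Finset.sum_congr rfl fun i _ => Finset.sum_congr rfl fun j _ => ?_
    rw [mul_std_mul_apply, conjTranspose_apply]
    rfl
  rw [h1]
  have h2 : U * (Uᴴ * Matrix.single p q (1:ℂ) * U) * Uᴴ
      = (U * Uᴴ) * Matrix.single p q (1:ℂ) * (U * Uᴴ) := by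
    simp only [Matrix.mul_assoc]
  rw [h2, hU, Matrix.one_mul, Matrix.mul_one]

lemma std_conj {n : ℕ} (U : Matrix (Fin n) (Fin n) ℂ) (p q : Fin n) :
    ∑ i, ∑ j, (U i p * (starRingEnd ℂ) (U j q)) • Matrix.single i j (1:ℂ)
      = U * Matrix.single p q (1:ℂ) * Uᴴ := by
  rw [← sum_smul_std (U * Matrix.single p q (1:ℂ) * Uᴴ)]
  refine Finset.sum_congr rfl fun i _ => Finset.sum_congr rfl fun j _ => ?_
  rw [mul_std_mul_apply, conjTranspose_apply]
  rfl

end Aux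

/-- `conj(U)^{⊗a} ⊗ U^{⊗b}` acting on `(ℂⁿ)^{⊗(a+b)}`. -/
noncomputable def conjKronPow (n a b : ℕ) (U : Matrix (Fin n) (Fin n) ℂ) :
    Matrix (Fin (a + b) → Fin n) (Fin (a + b) → Fin n) ℂ :=
  fun f g => ∏ i : Fin (a + b),
    if (i : ℕ) < a then (starRingEnd ℂ) (U (f i) (g i)) else U (f i) (g i)

/-- The Choi matrix `C_Φ = ∑_{i,j} e_{ij} ⊗ Φ(e_{ij})` of a linear map
`Φ : M_n(ℂ) → M_n(ℂ)^{⊗(a+b)}`. -/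
def ChoiMatrix (n a b : ℕ)
    (Φ : Matrix (Fin n) (Fin n) ℂ →ₗ[ℂ]
      Matrix (Fin (a + b) → Fin n) (Fin (a + b) → Fin n) ℂ) :
    Matrix (Fin n × (Fin (a + b) → Fin n)) (Fin n × (Fin (a + b) → Fin n)) ℂ :=
  fun p q => Φ (Matrix.single p.1 q.1 1) p.2 q.2

/-- `conj(U)^{⊗(a+1)} ⊗ U^{⊗b}` acting on `ℂⁿ ⊗ (ℂⁿ)^{⊗(a+b)}`. -/
noncomputable def conjKronPowSucc (n a b : ℕ) (U : Matrix (Fin n) (Fin n) ℂ) :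
    Matrix (Fin n × (Fin (a + b) → Fin n)) (Fin n × (Fin (a + b) → Fin n)) ℂ :=
  fun p q => (starRingEnd ℂ) (U p.1 q.1) * conjKronPow n a b U p.2 q.2

section Aux2

variable {n a b : ℕ}

lemma conjKronPow_unitary {U : Matrix (Fin n) (Fin n) ℂ} (hU : U * Uᴴ = 1) :
    conjKronPow n a b U * (conjKronPow n a b U)ᴴ = 1 := by
  ext f g
  rw [Matrix.mul_apply]
  calc ∑ h, conjKronPow n a b U f h * (conjKronPow n a b U)ᴴ h g
      = ∑ h : Fin (a+b) → Fin n, ∏ i : Fin (a+b),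
          (if (i : ℕ) < a then (starRingEnd ℂ) (U (f i) (h i)) * U (g i) (h i)
          else U (f i) (h i) * (starRingEnd ℂ) (U (g i) (h i))) := by
        refine Finset.sum_congr rfl fun h _ => ?_
        rw [conjTranspose_apply, conjKronPow, conjKronPow, star_prod, ← Finset.prod_mul_distrib]
        refine Finset.prod_congr rfl fun i _ => ?_
        by_cases hi : (i:ℕ) < a <;> simp [hi, Complex.star_def]
    _ = ∏ i : Fin (a+b), ∑ x : Fin n,
          (if (i : ℕ) < a then (starRingEnd ℂ) (U (f i) x) * U (g i) x
          else U (f i) x * (starRingEnd ℂ) (U (g i) x)) :=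
        (Fintype.prod_sum (fun (i : Fin (a+b)) (x : Fin n) =>
          if (i : ℕ) < a then (starRingEnd ℂ) (U (f i) x) * U (g i) x
          else U (f i) x * (starRingEnd ℂ) (U (g i) x))).symm
    _ = ∏ i : Fin (a+b), (1 : Matrix (Fin n) (Fin n) ℂ) (f i) (g i) := by
        refine Finset.prod_congr rfl fun i _ => ?_
        by_cases hi : (i:ℕ) < a <;> simp only [hi, if_true, if_false]
        · exact row_orth' hU _ _
        · exact row_orth hU _ _
    _ = _ := prod_one_apply f g

lemma conjKronPowSucc_eq (U : Matrix (Fin n) (Fin n) ℂ) :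
    conjKronPowSucc n a b U = (U.map (starRingEnd ℂ)) ⊗ₖ conjKronPow n a b U := by
  ext ⟨i,f⟩ ⟨j,g⟩
  rfl

lemma mapconj_unitary {U : Matrix (Fin n) (Fin n) ℂ} (hU : U * Uᴴ = 1) :
    (U.map (starRingEnd ℂ)) * (U.map (starRingEnd ℂ))ᴴ = 1 := by
  ext i j
  have := row_orth' hU i j
  simpa [Matrix.mul_apply, conjTranspose_apply, Matrix.map_apply, Complex.star_def] using this

lemma conjKronPowSucc_unitary {U : Matrix (Fin n) (Fin n) ℂ} (hU : U * Uᴴ = 1) :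
    conjKronPowSucc n a b U * (conjKronPowSucc n a b U)ᴴ = 1 := by
  rw [conjKronPowSucc_eq, kron_conjT, ← Matrix.mul_kronecker_mul, mapconj_unitary hU,
    conjKronPow_unitary hU, Matrix.one_kronecker_one]

variable (Φ : Matrix (Fin n) (Fin n) ℂ →ₗ[ℂ]
      Matrix (Fin (a + b) → Fin n) (Fin (a + b) → Fin n) ℂ)

lemma choi_eq : ChoiMatrix n a b Φ
    = ∑ i, ∑ j, (Matrix.single i j (1:ℂ)) ⊗ₖ Φ (Matrix.single i j 1) := by
  ext ⟨p1,p2⟩ ⟨q1,q2⟩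
  simp [ChoiMatrix, Matrix.sum_apply, kroneckerMap_apply, Matrix.single, ite_and,
    Finset.sum_ite_eq, Matrix.of_apply]

lemma sandwich (A : Matrix (Fin n) (Fin n) ℂ)
    (B : Matrix (Fin (a+b) → Fin n) (Fin (a+b) → Fin n) ℂ) :
    (A ⊗ₖ B) * ChoiMatrix n a b Φ * (A ⊗ₖ B)ᴴ
      = ∑ i, ∑ j, (A * Matrix.single i j (1:ℂ) * Aᴴ) ⊗ₖ (B * Φ (Matrix.single i j 1) * Bᴴ) := by
  rw [choi_eq, kron_conjT]
  simp only [Matrix.mul_sum, Matrix.sum_mul, Matrix.mul_kronecker_mul]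

end Aux2

theorem ab_unitarily_equivariant_iff_choi_commutes (n a b : ℕ) (hn : 1 ≤ n)
    (Φ : Matrix (Fin n) (Fin n) ℂ →ₗ[ℂ]
      Matrix (Fin (a + b) → Fin n) (Fin (a + b) → Fin n) ℂ) :
    (∀ U ∈ Matrix.unitaryGroup (Fin n) ℂ, ∀ X : Matrix (Fin n) (Fin n) ℂ,
        Φ (U * X * Uᴴ) = conjKronPow n a b U * Φ X * (conjKronPow n a b U)ᴴ) ↔
    (∀ U ∈ Matrix.unitaryGroup (Fin n) ℂ,
        Commute (ChoiMatrix n a b Φ) (conjKronPowSucc n a b U)) := by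
  constructor
  · intro hEq U hU
    have hUU : U * Uᴴ = 1 := by
      have := (Matrix.mem_unitaryGroup_iff).mp hU
      rwa [Matrix.star_eq_conjTranspose] at this
    have hW : conjKronPowSucc n a b U * (conjKronPowSucc n a b U)ᴴ = 1 :=
      conjKronPowSucc_unitary hUU
    have hW' : (conjKronPowSucc n a b U)ᴴ * conjKronPowSucc n a b U = 1 :=
      mul_eq_one_comm.mp hW
    have h1 : conjKronPowSucc n a b U * ChoiMatrix n a b Φ * (conjKronPowSucc n a b U)ᴴ
        = ChoiMatrix n a b Φ := by
      rw [conjKronPowSucc_eq, sandwich]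
      ext ⟨p, f⟩ ⟨q, g⟩
      simp only [Matrix.sum_apply, Matrix.kroneckerMap_apply]
      have key : ∀ i j : Fin n,
          (U.map (starRingEnd ℂ) * Matrix.single i j (1:ℂ) * (U.map (starRingEnd ℂ))ᴴ) p q
            = (starRingEnd ℂ) (U p i) * U q j := by
        intro i j
        rw [mul_std_mul_apply, conjTranspose_apply, Matrix.map_apply, Matrix.map_apply]
        simp [Complex.star_def]
      calc ∑ i, ∑ j,
            (U.map (starRingEnd ℂ) * Matrix.single i j (1:ℂ) * (U.map (starRingEnd ℂ))ᴴ) p q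
              * (conjKronPow n a b U * Φ (Matrix.single i j 1) * (conjKronPow n a b U)ᴴ) f g
          = ∑ i, ∑ j, ((starRingEnd ℂ) (U p i) * U q j)
              * Φ (U * Matrix.single i j 1 * Uᴴ) f g := by
            refine Finset.sum_congr rfl fun i _ => Finset.sum_congr rfl fun j _ => ?_
            rw [key i j, ← hEq U hU]
        _ = Φ (∑ i, ∑ j, ((starRingEnd ℂ) (U p i) * U q j)
              • (U * Matrix.single i j (1:ℂ) * Uᴴ)) f g := by
            simp only [map_sum, _root_.map_smul, Matrix.sum_apply, Matrix.smul_apply, smul_eq_mul]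
        _ = Φ (Matrix.single p q 1) f g := by rw [conj_std hUU]
        _ = ChoiMatrix n a b Φ (p, f) (q, g) := rfl
    show ChoiMatrix n a b Φ * conjKronPowSucc n a b U
        = conjKronPowSucc n a b U * ChoiMatrix n a b Φ
    calc ChoiMatrix n a b Φ * conjKronPowSucc n a b U
        = (conjKronPowSucc n a b U * ChoiMatrix n a b Φ * (conjKronPowSucc n a b U)ᴴ)
            * conjKronPowSucc n a b U := by rw [h1]
      _ = conjKronPowSucc n a b U * ChoiMatrix n a b Φ
            * ((conjKronPowSucc n a b U)ᴴ * conjKronPowSucc n a b U) := by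
          simp only [Matrix.mul_assoc]
      _ = conjKronPowSucc n a b U * ChoiMatrix n a b Φ := by rw [hW', Matrix.mul_one]
  · intro hCom U hU X
    have hUU : U * Uᴴ = 1 := by
      have := (Matrix.mem_unitaryGroup_iff).mp hU
      rwa [Matrix.star_eq_conjTranspose] at this
    have hV : conjKronPow n a b U * (conjKronPow n a b U)ᴴ = 1 := conjKronPow_unitary hUU
    have hW : conjKronPowSucc n a b U * (conjKronPowSucc n a b U)ᴴ = 1 :=
      conjKronPowSucc_unitary hUU
    have hW' : (conjKronPowSucc n a b U)ᴴ * conjKronPowSucc n a b U = 1 :=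
      mul_eq_one_comm.mp hW
    have hc : ChoiMatrix n a b Φ * conjKronPowSucc n a b U
        = conjKronPowSucc n a b U * ChoiMatrix n a b Φ := hCom U hU
    have h2 : (conjKronPowSucc n a b U)ᴴ * ChoiMatrix n a b Φ * conjKronPowSucc n a b U
        = ChoiMatrix n a b Φ := by
      rw [Matrix.mul_assoc, hc, ← Matrix.mul_assoc, hW', Matrix.one_mul]
    have hkr : (U.map (starRingEnd ℂ))ᴴ ⊗ₖ (conjKronPow n a b U)ᴴ
        = (conjKronPowSucc n a b U)ᴴ := by
      rw [conjKronPowSucc_eq, kron_conjT]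
    have h2' : ((U.map (starRingEnd ℂ))ᴴ ⊗ₖ (conjKronPow n a b U)ᴴ) * ChoiMatrix n a b Φ
        * ((U.map (starRingEnd ℂ))ᴴ ⊗ₖ (conjKronPow n a b U)ᴴ)ᴴ = ChoiMatrix n a b Φ := by
      rw [hkr, conjTranspose_conjTranspose]
      exact h2
    rw [sandwich] at h2'
    simp only [conjTranspose_conjTranspose] at h2'
    have h3 : ∀ p q : Fin n, Φ (Matrix.single p q 1)
        = (conjKronPow n a b U)ᴴ * Φ (U * Matrix.single p q 1 * Uᴴ) * conjKronPow n a b U := by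
      intro p q
      ext f g
      have hent := congrFun (congrFun h2'.symm (p, f)) (q, g)
      have key : ∀ i j : Fin n,
          ((U.map (starRingEnd ℂ))ᴴ * Matrix.single i j (1:ℂ) * U.map (starRingEnd ℂ)) p q
            = U i p * (starRingEnd ℂ) (U j q) := by
        intro i j
        rw [mul_std_mul_apply, conjTranspose_apply, Matrix.map_apply, Matrix.map_apply]
        simp [Complex.star_def]
      calc Φ (Matrix.single p q 1) f g
          = (∑ i, ∑ j,
              ((U.map (starRingEnd ℂ))ᴴ * Matrix.single i j (1:ℂ) * U.map (starRingEnd ℂ))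
                ⊗ₖ ((conjKronPow n a b U)ᴴ * Φ (Matrix.single i j 1) * conjKronPow n a b U))
                (p, f) (q, g) := hent
        _ = ∑ i, ∑ j, (U i p * (starRingEnd ℂ) (U j q))
              * ((conjKronPow n a b U)ᴴ * Φ (Matrix.single i j 1) * conjKronPow n a b U) f g := by
            simp only [Matrix.sum_apply, Matrix.kroneckerMap_apply]
            refine Finset.sum_congr rfl fun i _ => Finset.sum_congr rfl fun j _ => ?_
            rw [key i j]
        _ = ((conjKronPow n a b U)ᴴ
              * Φ (∑ i, ∑ j, (U i p * (starRingEnd ℂ) (U j q)) • Matrix.single i j (1:ℂ))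
              * conjKronPow n a b U) f g := by
            simp only [map_sum, _root_.map_smul, Matrix.mul_sum, Matrix.sum_mul, Matrix.mul_smul,
              Matrix.smul_mul, Matrix.sum_apply, Matrix.smul_apply, smul_eq_mul]
        _ = ((conjKronPow n a b U)ᴴ * Φ (U * Matrix.single p q 1 * Uᴴ)
              * conjKronPow n a b U) f g := by rw [std_conj]
    have hbasis : ∀ p q : Fin n, Φ (U * Matrix.single p q 1 * Uᴴ)
        = conjKronPow n a b U * Φ (Matrix.single p q 1) * (conjKronPow n a b U)ᴴ := by
      intro p q
      rw [h3 p q]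
      simp only [Matrix.mul_assoc]
      rw [hV, Matrix.mul_one]
      conv_rhs => rw [← Matrix.mul_assoc]
      rw [hV, Matrix.one_mul]
    have expand : U * X * Uᴴ = ∑ p, ∑ q, X p q • (U * Matrix.single p q (1:ℂ) * Uᴴ) := by
      conv_lhs => rw [← sum_smul_std X]
      simp only [Matrix.mul_sum, Matrix.sum_mul, Matrix.mul_smul, Matrix.smul_mul]
    rw [expand]
    conv_rhs => rw [← sum_smul_std X]
    simp only [map_sum, _root_.map_smul, Matrix.mul_sum, Matrix.sum_mul, Matrix.mul_smul,
      Matrix.smul_mul]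
    refine Finset.sum_congr rfl fun p _ => Finset.sum_congr rfl fun q _ => ?_
    rw [hbasis p q]
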